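/- Let ψ : [0, D/2) → ℝ solve the stationary equation ψ' + ψ² = Ṽ − μ with ψ(0) = 0, where Ṽ is continuous with −λ_−² ≤ Ṽ − μ ≤ λ_+² on [0, D/2). Then ψ(z) ≤ λ_+ tanh(λ_+ z) for all z in the interval of existence. -/

import Mathlib

open Set

lemma tanh_hasDerivAt (x : ℝ) : HasDerivAt Real.tanh (1 - Real.tanh x ^ 2) x := by
  have hc := Real.cosh_pos x
  have h := (Real.hasDerivAt_sinh x).div (Real.hasDerivAt_cosh x) hc.ne'
  have hid : (Real.cosh x * Real.cosh x - Real.sinh x * Real.sinh x) / Real.cosh x ^ 2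
      = 1 - Real.tanh x ^ 2 := by
    have := Real.cosh_sq_sub_sinh_sq x
    rw [Real.tanh_eq_sinh_div_cosh]
    field_simp
  rw [hid] at h
  exact h.congr_of_eventuallyEq (by filter_upwards with y; rw [Real.tanh_eq_sinh_div_cosh, Pi.div_apply])

lemma tanh_nonneg' {x : ℝ} (hx : 0 ≤ x) : 0 ≤ Real.tanh x := by
  rw [Real.tanh_eq_sinh_div_cosh]
  exact div_nonneg (Real.sinh_nonneg_iff.mpr hx) (Real.cosh_pos x).le

/-- If `ψ` solves `ψ' + ψ² = Ṽ − μ` on `[0, D/2)` with `ψ(0) = 0`,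
where `Ṽ` is continuous with `−λ₋² ≤ Ṽ − μ ≤ λ₊²`, then
`ψ(z) ≤ λ₊ tanh(λ₊ z)` on `[0, D/2)`. -/
theorem stmt_18 (D μ lamPlus lamMinus : ℝ) (hD : 0 < D) (hlamPlus : 0 < lamPlus)
    (Vt : ℝ → ℝ) (hVt : ContinuousOn Vt (Set.Ico 0 (D / 2)))
    (hlow : ∀ z ∈ Set.Ico (0 : ℝ) (D / 2), -lamMinus ^ 2 ≤ Vt z - μ)
    (hup : ∀ z ∈ Set.Ico (0 : ℝ) (D / 2), Vt z - μ ≤ lamPlus ^ 2)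
    (ψ : ℝ → ℝ)
    (hψ : ∀ z ∈ Set.Ico (0 : ℝ) (D / 2),
      HasDerivWithinAt ψ (Vt z - μ - ψ z ^ 2) (Set.Ico 0 (D / 2)) z)
    (hψ0 : ψ 0 = 0) :
    ∀ z ∈ Set.Ico (0 : ℝ) (D / 2), ψ z ≤ lamPlus * Real.tanh (lamPlus * z) := by
  set φ : ℝ → ℝ := fun z => lamPlus * Real.tanh (lamPlus * z) with hφdef
  have hφ : ∀ z : ℝ, HasDerivAt φ (lamPlus ^ 2 - φ z ^ 2) z := by
    intro z
    have h1 : HasDerivAt (fun z : ℝ => lamPlus * z) lamPlus z := by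
      simpa using (hasDerivAt_id z).const_mul lamPlus
    have h2 : HasDerivAt (fun y => lamPlus * (Real.tanh ∘ HMul.hMul lamPlus) y)
        (lamPlus * ((1 - Real.tanh (lamPlus * z) ^ 2) * lamPlus)) z := ((tanh_hasDerivAt (lamPlus * z)).comp z h1).const_mul lamPlus
    convert h2 using 1
    simp [hφdef]; ring
  have hφcont : Continuous φ :=
    continuous_iff_continuousAt.mpr fun z => (hφ z).continuousAt
  have hφ0 : φ 0 = 0 := by simp [hφdef]
  have hφnonneg : ∀ z : ℝ, 0 ≤ z → 0 ≤ φ z := fun z hz =>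
    mul_nonneg hlamPlus.le (tanh_nonneg' (mul_nonneg hlamPlus.le hz))
  intro z0 hz0
  by_contra hcon
  push_neg at hcon
  have hcon' : φ z0 < ψ z0 := hcon
  obtain ⟨hz0l, hz0r⟩ := hz0
  have hz0pos : 0 < z0 := by
    rcases hz0l.lt_or_eq with h | h
    · exact h
    · exfalso; rw [← h] at hcon'; rw [hψ0, hφ0] at hcon'; exact absurd hcon' (lt_irrefl 0)
  have hsub : Icc (0 : ℝ) z0 ⊆ Ico 0 (D / 2) := fun x hx => ⟨hx.1, lt_of_le_of_lt hx.2 hz0r⟩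
  have hψcont : ContinuousOn ψ (Ico 0 (D / 2)) := fun z hz => (hψ z hz).continuousWithinAt
  set u : ℝ → ℝ := fun z => ψ z - φ z with hudef
  have hucont : ContinuousOn u (Icc 0 z0) :=
    (hψcont.mono hsub).sub hφcont.continuousOn
  set S : Set ℝ := Icc 0 z0 ∩ u ⁻¹' Iic 0 with hSdef
  have hS_closed : IsClosed S :=
    hucont.preimage_isClosed_of_isClosed isClosed_Icc isClosed_Iic
  have hS_ne : S.Nonempty := ⟨0, ⟨le_refl 0, hz0pos.le⟩, by simp [hudef, hψ0, hφ0]⟩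
  have hS_bdd : BddAbove S := ⟨z0, fun x hx => hx.1.2⟩
  set s : ℝ := sSup S with hsdef
  have hsS : s ∈ S := hS_closed.csSup_mem hS_ne hS_bdd
  have hs0 : 0 ≤ s := hsS.1.1
  have hs_le : s ≤ z0 := hsS.1.2
  have hus : u s ≤ 0 := hsS.2
  have hs_lt : s < z0 := by
    rcases hs_le.lt_or_eq with h | h
    · exact h
    · exfalso; rw [h] at hus; simp only [hudef] at hus; linarith [hcon']
  have hpos : ∀ z ∈ Ioc s z0, φ z < ψ z := by
    intro z hz
    by_contra h
    push_neg at h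
    have hzS : z ∈ S := ⟨⟨le_trans hs0 hz.1.le, hz.2⟩, by simpa [hudef] using sub_nonpos.mpr h⟩
    exact absurd (le_csSup hS_bdd hzS) (not_le.mpr hz.1)
  have hderiv : ∀ x ∈ Ioo s z0, HasDerivAt u ((Vt x - μ - ψ x ^ 2) - (lamPlus ^ 2 - φ x ^ 2)) x := by
    intro x hx
    have hxmem : x ∈ Ico (0 : ℝ) (D / 2) := ⟨le_trans hs0 hx.1.le, lt_trans hx.2 hz0r⟩
    have hnhds : Ico (0 : ℝ) (D / 2) ∈ nhds x :=
      Filter.mem_of_superset (Ioo_mem_nhds (lt_of_le_of_lt hs0 hx.1) (lt_trans hx.2 hz0r))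
        Ioo_subset_Ico_self
    exact ((hψ x hxmem).hasDerivAt hnhds).sub (hφ x)
  have hanti : AntitoneOn u (Icc s z0) := by
    apply antitoneOn_of_deriv_nonpos (convex_Icc s z0)
    · exact hucont.mono (Icc_subset_Icc hs0 le_rfl)
    · rw [interior_Icc]
      exact fun x hx => ((hderiv x hx).differentiableAt).differentiableWithinAt
    · intro x hx
      rw [interior_Icc] at hx
      rw [(hderiv x hx).deriv]
      have hxmem : x ∈ Ico (0 : ℝ) (D / 2) := ⟨le_trans hs0 hx.1.le, lt_trans hx.2 hz0r⟩
      have h1 := hup x hxmem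
      have h2 := hpos x ⟨hx.1, hx.2.le⟩
      have h3 := hφnonneg x (le_trans hs0 hx.1.le)
      nlinarith
  have hfin : u z0 ≤ u s := hanti ⟨le_rfl, hs_le⟩ ⟨hs_le, le_rfl⟩ hs_le
  simp only [hudef] at hfin hus
  linarith [hcon']
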